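/- arXiv:1108.3724 — 2 statements merged into one kernel-verified Lean document; each statement's English description precedes it below -/
import Mathlib

section
/- The inclusion functor W ↪ PSh(C) admits a left adjoint ω; that is, W is a reflective full subcategory of the presheaf category PSh(C). (In the paper, ω(A) is called the Whitney category associated to the presheaf A.) -/
open CategoryTheory CategoryTheory.Limits Opposite

universe u

namespace WhitneyAux

variable {C D : Type u} [SmallCategory C] [SmallCategory D]

/-- Terms: a small inductive type which bounds the size of the "sheafy closure" of the
image of a morphism from `A` into a presheaf whose restriction along `ι` is a `J`-sheaf. -/
inductive Tm (ι : D ⥤ C) (J : GrothendieckTopology D) (A : Cᵒᵖ ⥤ Type u) : Cᵒᵖ → Type u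
  | img {c : Cᵒᵖ} (a : A.obj c) : Tm ι J A c
  | res {c c' : Cᵒᵖ} (g : c ⟶ c') (t : Tm ι J A c) : Tm ι J A c'
  | amalg (d : D) (S : Sieve d) (hS : S ∈ J d)
      (F : ∀ (d' : D) (f : d' ⟶ d), S f → Tm ι J A (op (ι.obj d'))) :
      Tm ι J A (op (ι.obj d))

variable (ι : D ⥤ C) (J : GrothendieckTopology D) {A X : Cᵒᵖ ⥤ Type u}

/-- The elements of `X` reachable from the image of `h` by restrictions and amalgamations. -/
inductive Reach (h : A ⟶ X) : ∀ c : Cᵒᵖ, X.obj c → Prop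
  | img {c : Cᵒᵖ} (a : A.obj c) : Reach h c (h.app c a)
  | res {c c' : Cᵒᵖ} (g : c ⟶ c') {x : X.obj c} : Reach h c x → Reach h c' (X.map g x)
  | amalg (d : D) (S : Sieve d) (hS : S ∈ J d) (x : X.obj (op (ι.obj d)))
      (hx : ∀ (d' : D) (f : d' ⟶ d), S f → Reach h (op (ι.obj d')) (X.map (ι.map f).op x)) :
      Reach h (op (ι.obj d)) x

variable (h : A ⟶ X)

/-- The closure of the image of `h` as a subpresheaf. -/
@[simps]
def Cl : Cᵒᵖ ⥤ Type u where
  obj c := {x : X.obj c // Reach ι J h c x}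
  map g := TypeCat.ofHom fun x => ⟨X.map g x.1, Reach.res g x.2⟩
  map_id c := by ext x; exact FunctorToTypes.map_id_apply X x.1
  map_comp g g' := by ext x; exact FunctorToTypes.map_comp_apply X g g' x.1

/-- The inclusion of the closure into `X`. -/
def clHom : Cl ι J h ⟶ X where
  app c := TypeCat.ofHom fun x => x.1
  naturality _ _ _ := rfl

/-- The corestriction of `h` to the closure. -/
def toCl : A ⟶ Cl ι J h where
  app c := TypeCat.ofHom fun a => ⟨h.app c a, Reach.img a⟩
  naturality c c' g := by
    ext a
    apply Subtype.ext
    exact FunctorToTypes.naturality h g a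

theorem isSheaf_cl (hX : Presieve.IsSheaf J (ι.op ⋙ X)) :
    Presieve.IsSheaf J (ι.op ⋙ Cl ι J h) := by
  intro d S hS x hx
  let y : Presieve.FamilyOfElements (ι.op ⋙ X) S := fun d' f hf => (x f hf).1
  have hy : y.Compatible := by
    intro Z₁ Z₂ W g₁ g₂ f₁ f₂ h₁ h₂ comm
    exact congrArg Subtype.val (hx g₁ g₂ h₁ h₂ comm)
  obtain ⟨t, ht, huniq⟩ := hX S hS y hy
  have hreach : Reach ι J h (op (ι.obj d)) t := by
    refine Reach.amalg d S hS t fun d' f hf => ?_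
    have := ht f hf
    rw [show X.map (ι.map f).op t = y f hf from this]
    exact (x f hf).2
  refine ⟨⟨t, hreach⟩, fun d' f hf => Subtype.ext (ht f hf), fun t' ht' => ?_⟩
  exact Subtype.ext (huniq t'.1 fun d' f hf => congrArg Subtype.val (ht' f hf))

/-- The evaluation (denotation) relation between terms and elements of `X`. -/
def EvalRel : ∀ {c : Cᵒᵖ}, Tm ι J A c → X.obj c → Prop
  | _, .img a, x => x = h.app _ a
  | _, .res g t, x => ∃ y, EvalRel t y ∧ x = X.map g y
  | _, .amalg d S _ F, x =>
      ∀ (d' : D) (f : d' ⟶ d) (hf : S f), EvalRel (F d' f hf) (X.map (ι.map f).op x)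

theorem exists_evalRel : ∀ {c : Cᵒᵖ} {x : X.obj c}, Reach ι J h c x →
    ∃ t : Tm ι J A c, EvalRel ι J h t x := by
  intro c x hx
  induction hx with
  | img a => exact ⟨.img a, rfl⟩
  | res g hx iht =>
    obtain ⟨t, ht⟩ := iht
    exact ⟨.res g t, _, ht, rfl⟩
  | amalg d S hS x hx ih =>
    choose F hF using ih
    exact ⟨.amalg d S hS F, hF⟩

theorem evalRel_func (hX : Presieve.IsSheaf J (ι.op ⋙ X)) :
    ∀ {c : Cᵒᵖ} (t : Tm ι J A c) {x x' : X.obj c},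
      EvalRel ι J h t x → EvalRel ι J h t x' → x = x' := by
  intro c t
  induction t with
  | img a =>
    intro x x' hx hx'
    rw [hx, hx']
  | res g t iht =>
    rintro x x' ⟨y, hy, rfl⟩ ⟨y', hy', rfl⟩
    rw [iht hy hy']
  | amalg d S hS F ihF =>
    intro x x' hx hx'
    exact (hX S hS).isSeparatedFor.ext fun d' f hf =>
      ihF d' f hf (hx d' f hf) (hx' d' f hf)

/-- A noncomputable choice of a term denoting every element of the closure. -/
noncomputable def toTm {c : Cᵒᵖ} (x : (Cl ι J h).obj c) : Tm ι J A c :=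
  (exists_evalRel ι J h x.2).choose

theorem evalRel_toTm {c : Cᵒᵖ} (x : (Cl ι J h).obj c) :
    EvalRel ι J h (toTm ι J h x) x.1 :=
  (exists_evalRel ι J h x.2).choose_spec

theorem toTm_injective (hX : Presieve.IsSheaf J (ι.op ⋙ X)) (c : Cᵒᵖ) :
    Function.Injective (toTm ι J h (c := c)) := by
  intro x x' e
  refine Subtype.ext (evalRel_func ι J h hX _ (evalRel_toTm ι J h x) ?_)
  rw [e]
  exact evalRel_toTm ι J h x'

/-- The data of a presheaf carried by subsets of the (small) type of terms, together with
a morphism from `A`.  This is a small type indexing a solution set for `A`. -/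
structure SolCore (ι : D ⥤ C) (J : GrothendieckTopology D) (A : Cᵒᵖ ⥤ Type u) : Type u where
  O : ∀ c : Cᵒᵖ, Set (Tm ι J A c)
  mp : ∀ {c c' : Cᵒᵖ}, (c ⟶ c') → O c → O c'
  mp_id : ∀ (c : Cᵒᵖ) (x : O c), mp (𝟙 c) x = x
  mp_comp : ∀ {c c' c'' : Cᵒᵖ} (g : c ⟶ c') (g' : c' ⟶ c'') (x : O c),
    mp (g ≫ g') x = mp g' (mp g x)
  ap : ∀ c : Cᵒᵖ, A.obj c → O c
  nat : ∀ {c c' : Cᵒᵖ} (g : c ⟶ c') (a : A.obj c), mp g (ap c a) = ap c' (A.map g a)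

variable {ι J}

/-- The presheaf associated to a `SolCore`. -/
@[simps]
def SolCore.F (s : SolCore ι J A) : Cᵒᵖ ⥤ Type u where
  obj c := s.O c
  map g := TypeCat.ofHom (s.mp g)
  map_id c := by ext x; exact congrArg Subtype.val (s.mp_id c x)
  map_comp g g' := by ext x; exact congrArg Subtype.val (s.mp_comp g g' x)

/-- The morphism from `A` associated to a `SolCore`. -/
def SolCore.hom (s : SolCore ι J A) : A ⟶ s.F where
  app c := TypeCat.ofHom (s.ap c)
  naturality c c' g := by ext a; exact (s.nat g a).symm

end WhitneyAux

open WhitneyAux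

/-- Closedness of the Whitney condition under limits of presheaves. -/
theorem whitneyAux_closed {C D : Type u} [SmallCategory C] [SmallCategory D]
    (ι : D ⥤ C) (J : GrothendieckTopology D) (K : Type u) [Category.{u} K] :
    ObjectProperty.IsClosedUnderLimitsOfShape
      (fun P : Cᵒᵖ ⥤ Type u => Presieve.IsSheaf J (ι.op ⋙ P)) K := by
  refine ⟨?_⟩
  rintro X ⟨⟨F, π, hc⟩, hF⟩
  let c : Cone F := Cone.mk X π
  let G : K ⥤ Sheaf J (Type u) :=
    { obj := fun k => ⟨ι.op ⋙ F.obj k,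
        (isSheaf_iff_isSheaf_of_type J _).mpr (hF k)⟩
      map := fun f => ⟨Functor.whiskerLeft ι.op (F.map f)⟩
      map_id := fun k => Sheaf.hom_ext (by simp)
      map_comp := fun f g => Sheaf.hom_ext (by simp) }
  let r := (Functor.whiskeringLeft Dᵒᵖ Cᵒᵖ (Type u)).obj ι.op
  have hE : IsLimit (r.mapCone c) := isLimitOfPreserves r hc
  have hsheaf : Presheaf.IsSheaf J (ι.op ⋙ c.pt) :=
    Sheaf.isSheaf_of_isLimit G (r.mapCone c) hE
  exact (isSheaf_iff_isSheaf_of_type J _).mp hsheaf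

/-- The inclusion of the full subcategory `W` (presheaves on `C` whose
restriction along `ι : D ⥤ C` is a `J`-sheaf) into `PSh(C)` admits a left adjoint `ω`;
that is, `W` is a reflective full subcategory of `PSh(C)`. -/
theorem whitney_inclusion_isRightAdjoint {C D : Type u} [SmallCategory C] [SmallCategory D]
    (ι : D ⥤ C) (J : GrothendieckTopology D) :
    (ObjectProperty.ι
      fun P : Cᵒᵖ ⥤ Type u => Presieve.IsSheaf J (ι.op ⋙ P)).IsRightAdjoint ∧
    Nonempty (Reflective (ObjectProperty.ι
      fun P : Cᵒᵖ ⥤ Type u => Presieve.IsSheaf J (ι.op ⋙ P))) := by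
  haveI : HasLimits (ObjectProperty.FullSubcategory
      fun P : Cᵒᵖ ⥤ Type u => Presieve.IsSheaf J (ι.op ⋙ P)) :=
    ⟨fun K _ => by haveI := whitneyAux_closed ι J K; infer_instance⟩
  haveI : PreservesLimits (ObjectProperty.ι
      fun P : Cᵒᵖ ⥤ Type u => Presieve.IsSheaf J (ι.op ⋙ P)) := by
    refine ⟨fun {K} _ => ?_⟩
    haveI := whitneyAux_closed ι J K
    infer_instance
  have ssc : SolutionSetCondition (ObjectProperty.ι
      fun P : Cᵒᵖ ⥤ Type u => Presieve.IsSheaf J (ι.op ⋙ P)) := by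
    intro A
    refine ⟨{s : SolCore ι J A // Presieve.IsSheaf J (ι.op ⋙ s.F)},
      fun s => ⟨s.1.F, s.2⟩, fun s => s.1.hom, ?_⟩
    intro X' h
    set X := X'.obj with hXdef
    have hX : Presieve.IsSheaf J (ι.op ⋙ X) := X'.property
    -- the equivalence between the closure and a family of subsets of the term type
    let e : ∀ c : Cᵒᵖ, (Cl ι J h).obj c ≃ Set.range (toTm ι J h (c := c)) :=
      fun c => Equiv.ofInjective _ (toTm_injective ι J h hX c)
    -- transport the closure presheaf onto subsets of the term type
    let s : SolCore ι J A :=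
      { O := fun c => Set.range (toTm ι J h (c := c))
        mp := fun {c c'} g x => e c' ((Cl ι J h).map g ((e c).symm x))
        mp_id := fun c x => by simp; exact (e c).apply_symm_apply x
        mp_comp := fun {c c' c''} g g' x => by simp; rfl
        ap := fun c a => e c ⟨h.app c a, Reach.img a⟩
        nat := fun {c c'} g a => by
          simp only [Equiv.symm_apply_apply]
          congr 1
          have h1 := congrArg (fun y => ((Cl ι J h).map g y).1)
            ((e c).symm_apply_apply ⟨h.app c a, Reach.img a⟩)
          have h2 := (FunctorToTypes.naturality h g a).symm
          exact Subtype.ext (h1.trans h2) }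
    let hiso : s.F ≅ Cl ι J h :=
      NatIso.ofComponents (fun c => Equiv.toIso (e c).symm) (by
        intro c c' g
        ext x
        exact (e c').symm_apply_apply _)
    have ssheaf : Presieve.IsSheaf J (ι.op ⋙ s.F) :=
      Presieve.isSheaf_iso J (Functor.isoWhiskerLeft ι.op hiso.symm) (isSheaf_cl ι J h hX)
    refine ⟨⟨s, ssheaf⟩, ObjectProperty.homMk (show s.F ⟶ X'.obj from hiso.hom ≫ clHom ι J h), ?_⟩
    apply NatTrans.ext
    funext c
    ext a
    show (clHom ι J h).app c (hiso.hom.app c (s.hom.app c a)) = h.app c a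
    have heq : hiso.hom.app c (s.hom.app c a) = ⟨h.app c a, Reach.img a⟩ := by
      show (e c).symm (e c ⟨h.app c a, Reach.img a⟩) = ⟨h.app c a, Reach.img a⟩
      exact (e c).symm_apply_apply _
    rw [heq]
    rfl
  have hra := isRightAdjoint_of_preservesLimits_of_solutionSetCondition _ ssc
  refine ⟨hra, ⟨?_⟩⟩
  haveI := hra
  exact { L := _, adj := Adjunction.ofIsRightAdjoint _ }
end

section
/- The relation on categories defined by 'there exists a strong equivalence span between A and B' is an equivalence relation: it is reflexive, symmetric, and transitive. In particular, if there are fully faithful, surjective-on-objects functors D ⥤ A, D ⥤ B and fully faithful, surjective-on-objects functors E ⥤ B, E ⥤ C, then there exist a category P and fully faithful, surjective-on-objects functors P ⥤ A and P ⥤ C. -/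
open CategoryTheory

universe v u

/-- A strong equivalence span between categories `A` and `B`: a span of functors
`A ⟵F P ⟶G B` in which both `F` and `G` are fully faithful and surjective on objects. -/
def StrongEquivSpan (A B : Type u) [Category.{v} A] [Category.{v} B] : Prop :=
  ∃ (P : Cat.{v, max u v}) (F : P ⥤ A) (G : P ⥤ B),
    F.Full ∧ F.Faithful ∧ Function.Surjective F.obj ∧
    G.Full ∧ G.Faithful ∧ Function.Surjective G.obj

/-- The "iso-comma" category of an equivalence: objects are pairs of objects together
with an isomorphism, with morphisms induced from `A`. -/
structure SpanObj {A B : Type u} [Category.{v} A] [Category.{v} B] (e : A ≌ B) :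
    Type (max u v) where
  a : A
  b : B
  iso : e.functor.obj a ≅ b

instance {A B : Type u} [Category.{v} A] [Category.{v} B] (e : A ≌ B) :
    Category.{v} (SpanObj e) where
  Hom x y := x.a ⟶ y.a
  id x := 𝟙 x.a
  comp f g := f ≫ g

/-- Left projection of the span. -/
def spanLeft {A B : Type u} [Category.{v} A] [Category.{v} B] (e : A ≌ B) :
    SpanObj e ⥤ A where
  obj x := x.a
  map f := f

/-- Right projection of the span. -/
def spanRight {A B : Type u} [Category.{v} A] [Category.{v} B] (e : A ≌ B) :
    SpanObj e ⥤ B where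
  obj x := x.b
  map {x y} f := x.iso.inv ≫ e.functor.map f ≫ y.iso.hom
  map_id x := by simp [CategoryStruct.id]
  map_comp f g := by simp [CategoryStruct.comp]

theorem strongEquivSpan_of_equiv {A B : Type u} [Category.{v} A] [Category.{v} B]
    (e : A ≌ B) : StrongEquivSpan A B := by
  refine ⟨Cat.of (SpanObj e), spanLeft e, spanRight e, ?_, ?_, ?_, ?_, ?_, ?_⟩
  · exact ⟨fun f => ⟨f, rfl⟩⟩
  · exact ⟨fun h => h⟩
  · exact fun a => ⟨⟨a, e.functor.obj a, Iso.refl _⟩, rfl⟩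
  · constructor
    intro x y g
    refine ⟨e.functor.preimage (x.iso.hom ≫ g ≫ y.iso.inv), ?_⟩
    simp [spanRight]
    exact (Category.assoc _ _ _).trans ((congrArg _ y.iso.inv_hom_id).trans (Category.comp_id _))
  · constructor
    intro x y f f' h
    apply e.functor.map_injective
    simpa [spanRight, Iso.cancel_iso_inv_left] using h
  · exact fun b => ⟨⟨e.inverse.obj b, b, e.counitIso.app b⟩, rfl⟩

theorem equiv_of_ff_surj {P A : Type*} [Category P] [Category A] (F : P ⥤ A)
    (h1 : F.Full) (h2 : F.Faithful) (h3 : Function.Surjective F.obj) :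
    F.IsEquivalence := by
  haveI := h1; haveI := h2
  haveI : F.EssSurj := ⟨fun a => ⟨(h3 a).choose, ⟨eqToIso (h3 a).choose_spec⟩⟩⟩
  exact { }

theorem equiv_of_strongEquivSpan {A B : Type u} [Category.{v} A] [Category.{v} B]
    (h : StrongEquivSpan A B) : Nonempty (A ≌ B) := by
  obtain ⟨P, F, G, h1, h2, h3, h4, h5, h6⟩ := h
  haveI := equiv_of_ff_surj F h1 h2 h3
  haveI := equiv_of_ff_surj G h4 h5 h6
  exact ⟨F.asEquivalence.symm.trans G.asEquivalence⟩

/-- The relation "there exists a strong equivalence span between `A` and `B`"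
is an equivalence relation on categories: reflexive, symmetric and transitive.  In
particular, given fully faithful surjective-on-objects functors `D ⥤ A`, `D ⥤ B` and
`E ⥤ B`, `E ⥤ C`, there are a category `P` and fully faithful surjective-on-objects
functors `P ⥤ A` and `P ⥤ C`. -/
theorem strongEquivSpan_equivalence :
    (∀ (A : Type u) [Category.{v} A], StrongEquivSpan A A) ∧
    (∀ (A B : Type u) [Category.{v} A] [Category.{v} B],
      StrongEquivSpan A B → StrongEquivSpan B A) ∧
    (∀ (A B C : Type u) [Category.{v} A] [Category.{v} B] [Category.{v} C],
      StrongEquivSpan A B → StrongEquivSpan B C → StrongEquivSpan A C) ∧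
    (∀ (A B C D E : Type u) [Category.{v} A] [Category.{v} B] [Category.{v} C]
      [Category.{v} D] [Category.{v} E]
      (F : D ⥤ A) (G : D ⥤ B) (H : E ⥤ B) (K : E ⥤ C),
      F.Full → F.Faithful → Function.Surjective F.obj →
      G.Full → G.Faithful → Function.Surjective G.obj →
      H.Full → H.Faithful → Function.Surjective H.obj →
      K.Full → K.Faithful → Function.Surjective K.obj →
      ∃ (P : Cat.{v, max u v}) (L : P ⥤ A) (M : P ⥤ C),
        L.Full ∧ L.Faithful ∧ Function.Surjective L.obj ∧
        M.Full ∧ M.Faithful ∧ Function.Surjective M.obj) := by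
  refine ⟨fun A _ => strongEquivSpan_of_equiv (CategoryTheory.Equivalence.refl),
    fun A B _ _ h => ?_, fun A B C _ _ _ hAB hBC => ?_, ?_⟩
  · obtain ⟨e⟩ := equiv_of_strongEquivSpan h
    exact strongEquivSpan_of_equiv e.symm
  · obtain ⟨e1⟩ := equiv_of_strongEquivSpan hAB
    obtain ⟨e2⟩ := equiv_of_strongEquivSpan hBC
    exact strongEquivSpan_of_equiv (e1.trans e2)
  · intro A B C D E _ _ _ _ _ F G H K hF1 hF2 hF3 hG1 hG2 hG3 hH1 hH2 hH3 hK1 hK2 hK3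
    haveI := equiv_of_ff_surj F hF1 hF2 hF3
    haveI := equiv_of_ff_surj G hG1 hG2 hG3
    haveI := equiv_of_ff_surj H hH1 hH2 hH3
    haveI := equiv_of_ff_surj K hK1 hK2 hK3
    exact strongEquivSpan_of_equiv
      ((F.asEquivalence.symm.trans G.asEquivalence).trans
        (H.asEquivalence.symm.trans K.asEquivalence))
end
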